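/- Let A be a real symmetric positive semidefinite n×n matrix, and define g(x) = ⟨x, A x⟩ (the quadratic form of A). Let x ∈ ℝⁿ with ‖x‖ = 1 and v ∈ ℝⁿ with ⟨x, v⟩ = 0. Then g((x+v)/‖x+v‖) ≤ g(x) + ⟨2·A x − 2·⟨x, A x⟩ • x, v⟩ + σ_max(A)·‖v‖², where σ_max(A) is the largest singular value of A (equivalently, the operator norm of A) and 2·A x − 2·⟨x, A x⟩ • x is the Riemannian gradient of g at x on the unit sphere. In particular the Lipschitz-type constant of the pullback of g under the retraction R_x(v) = (x+v)/‖x+v‖ is L = 2·σ_max(A). -/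

import Mathlib

open RealInnerProductSpace

lemma psd_inner_aux {n : ℕ} (A : Matrix (Fin n) (Fin n) ℝ) (hApsd : A.PosSemidef)
    (y : EuclideanSpace ℝ (Fin n)) :
    0 ≤ ⟪y, (Matrix.toEuclideanCLM (𝕜 := ℝ) A) y⟫ := by
  have h := (Matrix.posSemidef_iff_dotProduct_mulVec.mp hApsd).2 ((WithLp.equiv 2 _) y)
  simpa [← Matrix.coe_toEuclideanCLM_eq_toEuclideanLin, dotProduct, PiLp.inner_apply, Matrix.toEuclideanLin_apply, mul_comm] using h

lemma symm_inner_aux {n : ℕ} (A : Matrix (Fin n) (Fin n) ℝ) (hAsymm : A.IsSymm)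
    (y z : EuclideanSpace ℝ (Fin n)) :
    ⟪y, (Matrix.toEuclideanCLM (𝕜 := ℝ) A) z⟫ = ⟪(Matrix.toEuclideanCLM (𝕜 := ℝ) A) y, z⟫ := by
  have hH : A.IsHermitian := hAsymm
  have hS := Matrix.isHermitian_iff_isSymmetric.mp hH
  have := (hS y z).symm
  simpa [← Matrix.coe_toEuclideanCLM_eq_toEuclideanLin] using this

/-- Lipschitz-type bound for the Rayleigh quotient cost `g(x) = ⟨x, A x⟩` under the
sphere retraction: for `‖x‖ = 1` and `⟨x, v⟩ = 0`,
`g((x+v)/‖x+v‖) ≤ g(x) + ⟨grad g(x), v⟩ + σ_max(A)·‖v‖²`,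
where `grad g(x) = 2Ax − 2⟨x, Ax⟩x` and `σ_max(A) = ‖A‖` is the operator norm;
i.e. the Lipschitz-type constant of the pullback is `L = 2 σ_max(A)`. -/
theorem rayleigh_pullback_lipschitz_bound {n : ℕ} (A : Matrix (Fin n) (Fin n) ℝ)
    (hAsymm : A.IsSymm) (hApsd : A.PosSemidef)
    (x v : EuclideanSpace ℝ (Fin n)) (hx : ‖x‖ = 1) (hxv : ⟪x, v⟫ = 0) :
    ⟪‖x + v‖⁻¹ • (x + v), (Matrix.toEuclideanCLM (𝕜 := ℝ) A) (‖x + v‖⁻¹ • (x + v))⟫ ≤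
      ⟪x, (Matrix.toEuclideanCLM (𝕜 := ℝ) A) x⟫ +
        ⟪(2 : ℝ) • (Matrix.toEuclideanCLM (𝕜 := ℝ) A) x -
          (2 * ⟪x, (Matrix.toEuclideanCLM (𝕜 := ℝ) A) x⟫) • x, v⟫ +
        ‖Matrix.toEuclideanCLM (𝕜 := ℝ) A‖ * ‖v‖^2 := by
  set T := Matrix.toEuclideanCLM (𝕜 := ℝ) A with hT
  -- norm of x + v
  have hs : ‖x + v‖ ^ 2 = 1 + ‖v‖ ^ 2 := by
    rw [← real_inner_self_eq_norm_sq, inner_add_add_self, hxv, real_inner_comm x v, hxv,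
      real_inner_self_eq_norm_sq, real_inner_self_eq_norm_sq, hx]
    ring
  have hs1 : (1 : ℝ) ≤ ‖x + v‖ ^ 2 := by nlinarith [sq_nonneg ‖v‖]
  have hspos : (0 : ℝ) < ‖x + v‖ ^ 2 := lt_of_lt_of_le one_pos hs1
  -- expand the quadratic form at x + v
  have hxTv : ⟪x, T v⟫ = ⟪T x, v⟫ := symm_inner_aux A hAsymm x v
  have hvTx : ⟪v, T x⟫ = ⟪T x, v⟫ := real_inner_comm (T x) v
  have hexp : ⟪x + v, T (x + v)⟫ = ⟪x, T x⟫ + 2 * ⟪T x, v⟫ + ⟪v, T v⟫ := by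
    rw [map_add, inner_add_left, inner_add_right, inner_add_right, hxTv, hvTx]
    ring
  -- LHS equals the quadratic form scaled
  have hL : ⟪‖x + v‖⁻¹ • (x + v), T (‖x + v‖⁻¹ • (x + v))⟫ =
      (‖x + v‖ ^ 2)⁻¹ * ⟪x + v, T (x + v)⟫ := by
    rw [map_smul, real_inner_smul_left, real_inner_smul_right]
    rw [show ‖x + v‖⁻¹ * (‖x + v‖⁻¹ * ⟪x + v, T (x + v)⟫)
        = (‖x + v‖ * ‖x + v‖)⁻¹ * ⟪x + v, T (x + v)⟫ by
      rw [mul_inv]; ring]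
    rw [← sq]
  -- gradient term
  have hG : ⟪(2 : ℝ) • T x - (2 * ⟪x, T x⟫) • x, v⟫ = 2 * ⟪T x, v⟫ := by
    rw [inner_sub_left, real_inner_smul_left, real_inner_smul_left, hxv]
    ring
  rw [hL, hexp, hG]
  -- key inequalities
  have h1 : 0 ≤ ⟪v, T v⟫ := psd_inner_aux A hApsd v
  have h2 : ⟪v, T v⟫ ≤ ‖T‖ * ‖v‖ ^ 2 := by
    calc ⟪v, T v⟫ ≤ ‖v‖ * ‖T v‖ := real_inner_le_norm v (T v)
      _ ≤ ‖v‖ * (‖T‖ * ‖v‖) := by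
          exact mul_le_mul_of_nonneg_left (T.le_opNorm v) (norm_nonneg v)
      _ = ‖T‖ * ‖v‖ ^ 2 := by ring
  have h3 : 0 ≤ ⟪x, T x⟫ + 2 * ⟪T x, v⟫ + ⟪v, T v⟫ := by
    rw [← hexp]; exact psd_inner_aux A hApsd (x + v)
  -- conclude
  rw [inv_mul_le_iff₀ hspos, hs]
  nlinarith [sq_nonneg ‖v‖, norm_nonneg (T : _ →L[ℝ] _)]
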